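/- Let α₂, μ₂, σ₂ > 0, r > 1, φ̂ > 1 with 1 + r > 2φ̂, and let γ ∈ (0,1). Define LH(φ) = α₂μ₂γφ^{γ−1} − α₂γφ^{γ+r−1} − α₂μ₂γφ^{−1} + α₂γφ^{r−1} + (σ₂²/2)γ(γ−1)φ^{γ+2φ̂−2} + (σ₂²/2)γφ^{2φ̂−2} for φ > 0. Then there exists a constant K₀ such that LH(φ) ≤ K₀ for all φ > 0. -/
import Mathlib


/-- The Itô generator of `H(φ) = φ^γ − 1 − γ log φ` along the CEV-type volatility SDE
is bounded above on `(0,∞)`. -/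
theorem stmt3 (α₂ μ₂ σ₂ r φh γ : ℝ) (hα : 0 < α₂) (hμ : 0 < μ₂) (hσ : 0 < σ₂)
    (hr : 1 < r) (hφh : 1 < φh) (hcond : 2 * φh < 1 + r) (hγ : γ ∈ Set.Ioo (0 : ℝ) 1) :
    ∃ K₀ : ℝ, ∀ φ : ℝ, 0 < φ →
      α₂ * μ₂ * γ * φ ^ (γ - 1) - α₂ * γ * φ ^ (γ + r - 1)
        - α₂ * μ₂ * γ * φ ^ (-1 : ℝ) + α₂ * γ * φ ^ (r - 1)
        + σ₂ ^ 2 / 2 * γ * (γ - 1) * φ ^ (γ + 2 * φh - 2)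
        + σ₂ ^ 2 / 2 * γ * φ ^ (2 * φh - 2) ≤ K₀ := by
  obtain ⟨hγ0, hγ1⟩ := hγ
  set a := α₂ * γ with ha_def
  have ha : 0 < a := mul_pos hα hγ0
  set b := σ₂ ^ 2 / 2 * γ with hb_def
  have hb : 0 < b := mul_pos (by positivity) hγ0
  set c := a + b with hc_def
  have hc : 0 < c := by positivity
  set M := max 1 ((c / a) ^ (1 / γ)) with hM_def
  have hM1 : (1 : ℝ) ≤ M := le_max_left _ _
  refine ⟨α₂ * μ₂ * γ + c * M ^ (r - 1), ?_⟩
  intro φ hφ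
  have hq : 0 < r - 1 := by linarith
  have hs : 0 < 2 * φh - 2 := by linarith
  have hsq : 2 * φh - 2 ≤ r - 1 := by linarith
  -- the second-order curvature term is nonpositive
  have hT5 : b * (γ - 1) * φ ^ (γ + 2 * φh - 2) ≤ 0 := by
    have h1 : 0 < φ ^ (γ + 2 * φh - 2) := Real.rpow_pos_of_pos hφ _
    have h2 : b * (γ - 1) < 0 :=
      mul_neg_of_pos_of_neg hb (by linarith)
    exact (mul_neg_of_neg_of_pos h2 h1).le
  -- the φ^(γ-1) and φ^(-1) pair is bounded
  have hT13 : α₂ * μ₂ * γ * φ ^ (γ - 1) - α₂ * μ₂ * γ * φ ^ (-1 : ℝ) ≤ α₂ * μ₂ * γ := by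
    have hco : 0 < α₂ * μ₂ * γ := mul_pos (mul_pos hα hμ) hγ0
    rcases le_or_gt φ 1 with h1 | h1
    · have h2 : φ ^ (γ - 1) ≤ φ ^ (-1 : ℝ) :=
        Real.rpow_le_rpow_of_exponent_ge hφ h1 (by linarith)
      nlinarith
    · have h2 : φ ^ (γ - 1) ≤ 1 :=
        Real.rpow_le_one_of_one_le_of_nonpos h1.le (by linarith)
      have h3 : 0 < φ ^ (-1 : ℝ) := Real.rpow_pos_of_pos hφ _
      nlinarith
  -- the main polynomial-type part is bounded by c * M ^ (r-1)
  have hmain : -(a * φ ^ (γ + r - 1)) + a * φ ^ (r - 1) + b * φ ^ (2 * φh - 2)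
      ≤ c * M ^ (r - 1) := by
    rcases le_or_gt φ M with hcase | hcase
    · have h1 : φ ^ (r - 1) ≤ M ^ (r - 1) := Real.rpow_le_rpow hφ.le hcase hq.le
      have h2 : φ ^ (2 * φh - 2) ≤ M ^ (r - 1) := by
        rcases le_or_gt φ 1 with h3 | h3
        · calc φ ^ (2 * φh - 2) ≤ 1 := Real.rpow_le_one hφ.le h3 hs.le
            _ ≤ M ^ (r - 1) := Real.one_le_rpow hM1 hq.le
        · calc φ ^ (2 * φh - 2) ≤ φ ^ (r - 1) :=
              Real.rpow_le_rpow_of_exponent_le h3.le hsq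
            _ ≤ M ^ (r - 1) := h1
      have h4 : 0 < a * φ ^ (γ + r - 1) := mul_pos ha (Real.rpow_pos_of_pos hφ _)
      have hc' : c * M ^ (r - 1) = a * M ^ (r - 1) + b * M ^ (r - 1) := by
        rw [hc_def]; ring
      nlinarith
    · have h1 : 1 < φ := lt_of_le_of_lt hM1 hcase
      have h3 : (c / a) ^ (1 / γ) < φ := lt_of_le_of_lt (le_max_right 1 _) hcase
      have h4 : ((c / a) ^ (1 / γ)) ^ γ < φ ^ γ :=
        Real.rpow_lt_rpow (Real.rpow_nonneg (by positivity) _) h3 hγ0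
      have heq : ((c / a) ^ (1 / γ)) ^ γ = c / a := by
        rw [← Real.rpow_mul (by positivity), one_div_mul_cancel hγ0.ne', Real.rpow_one]
      have h2 : c / a < φ ^ γ := heq ▸ h4
      have h5 : c < a * φ ^ γ := by
        rw [div_lt_iff₀ ha] at h2; linarith
      have hsplit : φ ^ (γ + r - 1) = φ ^ γ * φ ^ (r - 1) := by
        rw [← Real.rpow_add hφ]; ring_nf
      have h6 : φ ^ (2 * φh - 2) ≤ φ ^ (r - 1) :=
        Real.rpow_le_rpow_of_exponent_le h1.le hsq
      have h7 : 0 < φ ^ (r - 1) := Real.rpow_pos_of_pos hφ _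
      have h8 : 0 ≤ c * M ^ (r - 1) := by positivity
      have h9 : c * φ ^ (r - 1) < a * φ ^ (γ + r - 1) := by
        calc c * φ ^ (r - 1) < a * φ ^ γ * φ ^ (r - 1) :=
              mul_lt_mul_of_pos_right h5 h7
          _ = a * φ ^ (γ + r - 1) := by rw [hsplit]; ring
      have h10 : c * φ ^ (r - 1) = a * φ ^ (r - 1) + b * φ ^ (r - 1) := by
        rw [hc_def]; ring
      linarith [h9, h10, h8, mul_le_mul_of_nonneg_left h6 hb.le]
  linarith
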